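/- Let k be a field of characteristic zero that is algebraically closed, and let f_1 ∈ k[x_1],...,f_n ∈ k[x_n] be nonconstant univariate polynomials with root sets A_i and multiplicities ν_i, and set I = (f_1,...,f_n) ⊆ k[x_1,...,x_n]. Then the maximal degree of a minimal polynomial of an element of k[x_1,...,x_n]/I over k equals Σ_{a ∈ A_1×...×A_n} (ν_1(a_1) + ... + ν_n(a_n) - n + 1). -/

import Mathlib

namespace Stmt8

open MvPolynomial

variable {k : Type*} [Field k] {n : ℕ}

/-- The ideal generated by pure powers of the variables. -/
noncomputable def J0 (e : Fin n → ℕ) : Ideal (MvPolynomial (Fin n) k) :=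
  Ideal.span (Set.range fun i => (X i : MvPolynomial (Fin n) k) ^ e i)

lemma coeff_eq_zero_of_mem_J0 {e : Fin n → ℕ} {p : MvPolynomial (Fin n) k}
    (hp : p ∈ J0 e) {d : Fin n →₀ ℕ} (hd : ∀ i, d i < e i) : coeff d p = 0 := by
  rw [J0, Ideal.mem_span_range_iff_exists_fun] at hp
  obtain ⟨f, rfl⟩ := hp
  rw [coeff_sum]
  refine Finset.sum_eq_zero fun i _ => ?_
  rw [X_pow_eq_monomial, coeff_mul_monomial', if_neg]
  rw [Finsupp.single_le_iff]
  exact not_le.mpr (hd i)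

lemma mem_J0_of_support {e : Fin n → ℕ} {p : MvPolynomial (Fin n) k}
    (h : ∀ d ∈ p.support, ∃ i, e i ≤ d i) : p ∈ J0 e := by
  rw [as_sum p]
  refine Ideal.sum_mem _ fun d hd => ?_
  obtain ⟨i, hi⟩ := h d hd
  have hle : Finsupp.single i (e i) ≤ d := Finsupp.single_le_iff.mpr hi
  have hmono : monomial d (coeff d p)
      = monomial (d - Finsupp.single i (e i)) (coeff d p) * X i ^ e i := by
    rw [X_pow_eq_monomial, monomial_mul, mul_one, tsub_add_cancel_of_le hle]
  rw [hmono]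
  exact Ideal.mul_mem_left _ _ (Ideal.subset_span ⟨i, rfl⟩)

lemma support_pow_sum_le {ζ : MvPolynomial (Fin n) k} (h0 : constantCoeff ζ = 0) (m : ℕ) :
    ∀ d ∈ (ζ ^ m).support, m ≤ ∑ i, d i := by
  induction m with
  | zero => simp
  | succ m ih =>
    intro d hd
    rw [pow_succ, mem_support_iff, coeff_mul] at hd
    obtain ⟨⟨u, v⟩, huv, hne⟩ := Finset.exists_ne_zero_of_sum_ne_zero hd
    rw [Finset.HasAntidiagonal.mem_antidiagonal] at huv
    have h1 : m ≤ ∑ i, u i := ih u (mem_support_iff.mpr (left_ne_zero_of_mul hne))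
    have h2 : v ≠ 0 := by
      rintro rfl
      rw [← constantCoeff_eq] at hne
      simp [h0] at hne
    obtain ⟨j, hj⟩ := Finsupp.support_nonempty_iff.mpr h2
    have h3 : 1 ≤ ∑ i, v i := by
      have : 1 ≤ v j := Nat.one_le_iff_ne_zero.mpr (Finsupp.mem_support_iff.mp hj)
      exact le_trans this (Finset.single_le_sum (fun i _ => Nat.zero_le _) (Finset.mem_univ j))
    have h4 : ∑ i, d i = (∑ i, u i) + ∑ i, v i := by
      rw [← huv, ← Finset.sum_add_distrib]
      simp [Finsupp.add_apply]
    omega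

lemma pow_mem_J0 {e : Fin n → ℕ} (he : ∀ i, 1 ≤ e i) {ζ : MvPolynomial (Fin n) k}
    (h0 : constantCoeff ζ = 0) : ζ ^ ((∑ i, e i) - n + 1) ∈ J0 e := by
  apply mem_J0_of_support
  intro d hd
  by_contra hc
  push_neg at hc
  have h1 := support_pow_sum_le h0 _ d hd
  have h2 : (∑ i, d i) + n ≤ ∑ i, e i := by
    calc (∑ i, d i) + n = ∑ i, (d i + 1) := by
          rw [Finset.sum_add_distrib]; simp
    _ ≤ ∑ i, e i := Finset.sum_le_sum fun i _ => hc i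
  omega

lemma pow_sum_not_mem_J0 [CharZero k] {e : Fin n → ℕ} (he : ∀ i, 1 ≤ e i)
    {lam : Fin n → k} (hlam : ∀ i, lam i ≠ 0) :
    (∑ i, C (lam i) * X i) ^ (∑ i, (e i - 1)) ∉ J0 (k := k) e := by
  intro hmem
  set d : Fin n →₀ ℕ := Finsupp.equivFunOnFinite.symm (fun i => e i - 1) with hdd
  have hdi : ∀ i, d i = e i - 1 := fun i => rfl
  have hd : ∀ i, d i < e i := fun i => by have := he i; rw [hdi i]; omega
  have h0 := coeff_eq_zero_of_mem_J0 hmem hd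
  apply absurd h0
  have hmono : ∀ g : Fin n → ℕ,
      (∏ i, (C (lam i) * X i) ^ g i : MvPolynomial (Fin n) k)
        = C (∏ i, lam i ^ g i) * monomial (Finsupp.equivFunOnFinite.symm g) 1 := by
    intro g
    rw [← prod_X_pow_eq_monomial]
    simp_rw [mul_pow]
    rw [Finset.prod_mul_distrib, map_prod]
    simp_rw [map_pow]
    congr 1
    refine (Finset.prod_subset (Finset.subset_univ _) ?_).symm
    intro i _ hni
    rw [show g i = 0 from Finsupp.notMem_support_iff.mp hni, pow_zero]
  rw [Finset.sum_pow_eq_sum_piAntidiag, coeff_sum]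
  rw [Finset.sum_eq_single (fun i => e i - 1)]
  · rw [hmono]
    rw [show ((Nat.multinomial Finset.univ fun i => e i - 1 : ℕ) : MvPolynomial (Fin n) k)
        = C ((Nat.multinomial Finset.univ fun i => e i - 1 : ℕ) : k) from (map_natCast C _).symm]
    rw [coeff_C_mul, coeff_C_mul, coeff_monomial, if_pos rfl, mul_one]
    refine mul_ne_zero (Nat.cast_ne_zero.mpr (Nat.multinomial_pos _ _).ne') ?_
    exact Finset.prod_ne_zero_iff.mpr fun i _ => pow_ne_zero _ (hlam i)
  · intro g hg hgne
    rw [hmono]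
    rw [show ((Nat.multinomial Finset.univ g : ℕ) : MvPolynomial (Fin n) k)
        = C ((Nat.multinomial Finset.univ g : ℕ) : k) from (map_natCast C _).symm]
    rw [coeff_C_mul, coeff_C_mul, coeff_monomial, if_neg, mul_zero, mul_zero]
    intro hEq
    exact hgne (Finsupp.equivFunOnFinite.symm.injective (hEq.trans hdd.symm ▸ hEq))
  · intro hni
    exact absurd (Finset.mem_piAntidiag.mpr ⟨rfl, fun i _ => Finset.mem_univ i⟩) hni


lemma aeval_shift_inv (b : Fin n → k) (q : MvPolynomial (Fin n) k) :
    aeval (fun i => X i - C (b i)) (aeval (fun i => X i + C (b i)) q) = q := by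
  rw [← AlgHom.comp_apply]
  have h : (aeval (fun i => X i - C (b i))).comp (aeval fun i => X i + C (b i))
      = AlgHom.id k (MvPolynomial (Fin n) k) := by
    ext i
    simp [algebraMap_eq]
  rw [h, AlgHom.id_apply]

lemma mem_span_shift_iff {b : Fin n → k} {e : Fin n → ℕ} {p : MvPolynomial (Fin n) k} :
    p ∈ Ideal.span (Set.range fun i => (X i - C (b i)) ^ e i) ↔
      aeval (fun i => X i + C (b i)) p ∈ J0 (k := k) e := by
  constructor
  · intro hp
    rw [Ideal.mem_span_range_iff_exists_fun] at hp
    obtain ⟨f, rfl⟩ := hp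
    rw [J0, Ideal.mem_span_range_iff_exists_fun]
    refine ⟨fun i => aeval (fun j => X j + C (b j)) (f i), ?_⟩
    rw [map_sum]
    refine Finset.sum_congr rfl fun i _ => ?_
    rw [map_mul, map_pow, map_sub, aeval_X, aeval_C, algebraMap_eq, add_sub_cancel_right]
  · intro hp
    rw [J0, Ideal.mem_span_range_iff_exists_fun] at hp
    obtain ⟨f, hf⟩ := hp
    have hp2 : p = ∑ i, aeval (fun j => X j - C (b j)) (f i) * (X i - C (b i)) ^ e i := by
      have := congrArg (aeval (fun i => X i - C (b i))) hf
      rw [aeval_shift_inv] at this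
      rw [← this, map_sum]
      refine Finset.sum_congr rfl fun i _ => ?_
      rw [map_mul, map_pow, aeval_X]
    rw [hp2, Ideal.mem_span_range_iff_exists_fun]
    exact ⟨fun i => aeval (fun j => X j - C (b j)) (f i), rfl⟩

lemma eval_comp_shift (b : Fin n → k) (q : MvPolynomial (Fin n) k) :
    eval (0 : Fin n → k) (aeval (fun i => X i + C (b i)) q) = eval b q := by
  have h : (eval (0 : Fin n → k)).comp
      ((aeval (fun i => X i + C (b i)) : MvPolynomial (Fin n) k →ₐ[k]
        MvPolynomial (Fin n) k) : MvPolynomial (Fin n) k →+* MvPolynomial (Fin n) k)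
      = eval b := by
    apply ringHom_ext <;> intros <;> simp [algebraMap_eq]
  exact RingHom.congr_fun h q

lemma pow_mem_Qid {b : Fin n → k} {e : Fin n → ℕ} (he : ∀ i, 1 ≤ e i)
    {ζ : MvPolynomial (Fin n) k} (hζ : eval b ζ = 0) :
    ζ ^ ((∑ i, e i) - n + 1) ∈ Ideal.span (Set.range fun i => (X i - C (b i)) ^ e i) := by
  rw [mem_span_shift_iff, map_pow]
  apply pow_mem_J0 he
  rw [← eval_zero, eval_comp_shift, hζ]

lemma pow_not_mem_Qid [CharZero k] {b : Fin n → k} {e : Fin n → ℕ} (he : ∀ i, 1 ≤ e i)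
    {lam : Fin n → k} (hlam : ∀ i, lam i ≠ 0) :
    (∑ i, C (lam i) * (X i - C (b i))) ^ (∑ i, (e i - 1)) ∉
      Ideal.span (Set.range fun i => (X i - C (b i)) ^ e i) := by
  rw [mem_span_shift_iff, map_pow, map_sum]
  have h : ∀ i ∈ Finset.univ, aeval (fun j => X j + C (b j)) (C (lam i) * (X i - C (b i)))
      = C (lam i) * X i := by
    intro i _
    simp [algebraMap_eq]
  rw [Finset.sum_congr rfl h]
  exact pow_sum_not_mem_J0 he hlam

lemma isUnit_mk_of_eval_ne_zero {b : Fin n → k} {e : Fin n → ℕ} (he : ∀ i, 1 ≤ e i)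
    {w : MvPolynomial (Fin n) k} (hw : eval b w ≠ 0) :
    IsUnit (Ideal.Quotient.mk (Ideal.span (Set.range fun i => (X i - C (b i)) ^ e i)) w) := by
  set Q := Ideal.span (Set.range fun i => (X i - C (b i)) ^ e i) with hQ
  have h1 : IsNilpotent (Ideal.Quotient.mk Q (w - C (eval b w))) := by
    refine ⟨(∑ i, e i) - n + 1, ?_⟩
    rw [← map_pow, Ideal.Quotient.eq_zero_iff_mem]
    exact pow_mem_Qid he (by simp)
  have h2 : IsUnit (Ideal.Quotient.mk Q (C (eval b w))) :=
    (hw.isUnit.map (C : k →+* MvPolynomial (Fin n) k)).map (Ideal.Quotient.mk Q)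
  have h3 : w = C (eval b w) + (w - C (eval b w)) := by ring
  rw [h3, RingHom.map_add]
  exact h1.isUnit_add_left_of_commute h2 (Commute.all _ _)

lemma exists_lambda [CharZero k] (S : Finset (Fin n → k)) :
    ∃ lam : Fin n → k, (∀ i, lam i ≠ 0) ∧
      ∀ a ∈ S, ∀ a' ∈ S, (∑ i, lam i * a i) = (∑ i, lam i * a' i) → a = a' := by
  classical
  set F : MvPolynomial (Fin n) k :=
    (∏ i, X i) * ∏ z ∈ (S ×ˢ S).filter (fun z => z.1 ≠ z.2),
      (∑ i, C (z.1 i - z.2 i) * X i) with hF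
  have hcoeff : ∀ c : Fin n → k, ∀ i : Fin n,
      coeff (Finsupp.single i 1) (∑ j, C (c j) * X j) = c i := by
    intro c i
    rw [coeff_sum]
    simp only [coeff_C_mul, coeff_X']
    have hs : ∀ x : Fin n, ((Finsupp.single x 1 : Fin n →₀ ℕ) = Finsupp.single i 1) ↔ x = i :=
      fun x => ⟨fun h => Finsupp.single_left_injective one_ne_zero h, fun h => by rw [h]⟩
    simp_rw [hs]
    simp
  have hFne : F ≠ 0 := by
    apply mul_ne_zero
    · exact Finset.prod_ne_zero_iff.mpr fun i _ => X_ne_zero i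
    · refine Finset.prod_ne_zero_iff.mpr fun z hz => ?_
      rw [Finset.mem_filter] at hz
      intro h0
      have hex : ∃ i, z.1 i ≠ z.2 i := by
        by_contra hcon
        push_neg at hcon
        exact hz.2 (funext hcon)
      obtain ⟨i, hi⟩ := hex
      apply hi
      have := congrArg (coeff (Finsupp.single i 1)) h0
      rw [hcoeff] at this
      simp at this
      exact sub_eq_zero.mp this
  have hex : ∃ x, eval x F ≠ 0 := by
    by_contra hcon
    push_neg at hcon
    exact hFne (funext_iff.mpr fun x => by rw [hcon x, map_zero])
  obtain ⟨lam, hlam⟩ := hex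
  rw [hF, map_mul, map_prod, map_prod] at hlam
  have h1 := left_ne_zero_of_mul hlam
  have h2 := right_ne_zero_of_mul hlam
  rw [Finset.prod_ne_zero_iff] at h1 h2
  refine ⟨lam, fun i => ?_, fun a ha a' ha' hsum => ?_⟩
  · have := h1 i (Finset.mem_univ i)
    rwa [eval_X] at this
  · by_contra hne
    have hmem : (a, a') ∈ (S ×ˢ S).filter (fun z => z.1 ≠ z.2) := by
      rw [Finset.mem_filter, Finset.mem_product]
      exact ⟨⟨ha, ha'⟩, hne⟩
    have := h2 _ hmem
    apply this
    rw [map_sum]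
    simp only [map_mul, eval_C, eval_X, sub_mul]
    rw [Finset.sum_sub_distrib]
    have e1 : ∑ i, a i * lam i = ∑ i, lam i * a i := by simp [mul_comm]
    have e2 : ∑ i, a' i * lam i = ∑ i, lam i * a' i := by simp [mul_comm]
    rw [e1, e2, hsum, sub_self]
  
lemma prod_mem_span_products {R α ι : Type*} [CommRing R] (G : α → ι → R)
    {s : Finset α} (hs : s.Nonempty) (g : α → R)
    (hg : ∀ a ∈ s, g a ∈ Ideal.span (Set.range (G a))) :
    (∏ a ∈ s, g a) ∈ Ideal.span {x | ∃ χ : α → ι, x = ∏ a ∈ s, G a (χ a)} := by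
  classical
  induction hs using Finset.Nonempty.cons_induction with
  | singleton a =>
    rw [Finset.prod_singleton]
    refine Ideal.span_le.mpr ?_ (hg a (by simp))
    rintro _ ⟨i, rfl⟩
    exact Ideal.subset_span ⟨fun _ => i, by rw [Finset.prod_singleton]⟩
  | cons a t ha hne ih =>
    rw [Finset.prod_cons]
    have h1 : g a ∈ Ideal.span (Set.range (G a)) := hg a (Finset.mem_cons_self a t)
    have h2 := ih (fun b hb => hg b (Finset.mem_cons_of_mem hb))
    have h3 := Ideal.mul_mem_mul h1 h2
    rw [Ideal.span_mul_span'] at h3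
    refine Ideal.span_le.mpr ?_ h3
    rintro x hx
    rw [Set.mem_mul] at hx
    obtain ⟨y, hy, z, hz, rfl⟩ := hx
    obtain ⟨i, rfl⟩ := hy
    obtain ⟨χ, rfl⟩ := hz
    refine Ideal.subset_span ⟨Function.update χ a i, ?_⟩
    rw [Finset.prod_cons, Function.update_self]
    congr 1
    refine Finset.prod_congr rfl fun b hb => ?_
    rw [Function.update_of_ne (ne_of_mem_of_not_mem hb ha)]

end Stmt8

open Stmt8 MvPolynomial

theorem stmt_8 (k : Type*) [Field k] [CharZero k] [IsAlgClosed k] (n : ℕ)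
    (A : Fin n → Finset k) (hA : ∀ i, (A i).Nonempty)
    (ν : Fin n → k → ℕ) (hν : ∀ i, ∀ a ∈ A i, 1 ≤ ν i a)
    (I : Ideal (MvPolynomial (Fin n) k))
    (hI : I = Ideal.span (Set.range fun i =>
      ∏ a ∈ A i, (MvPolynomial.X i - MvPolynomial.C a) ^ ν i a)) :
    sSup (Set.range fun δ : MvPolynomial (Fin n) k ⧸ I => (minpoly k δ).natDegree)
      = ∑ a ∈ Fintype.piFinset A, ((∑ i, ν i (a i)) - n + 1) := by
  classical
  set pts := Fintype.piFinset A with hpts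
  set m : (Fin n → k) → ℕ := fun a => (∑ i, ν i (a i)) - n + 1 with hm
  have hA1 : ∀ a ∈ pts, ∀ i, a i ∈ A i := fun a ha i => (Fintype.mem_piFinset.mp ha) i
  have hν1 : ∀ a ∈ pts, ∀ i, 1 ≤ ν i (a i) := fun a ha i => hν i _ (hA1 a ha i)
  have hptsne : pts.Nonempty :=
    ⟨fun i => (hA i).choose, Fintype.mem_piFinset.mpr fun i => (hA i).choose_spec⟩
  have hsn : ∀ a ∈ pts, n ≤ ∑ i, ν i (a i) := by
    intro a ha
    calc n = ∑ _i : Fin n, 1 := by simp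
    _ ≤ ∑ i, ν i (a i) := Finset.sum_le_sum fun i _ => hν1 a ha i
  have cover : ∀ χ : (Fin n → k) → Fin n,
      (∏ a ∈ pts, (X (χ a) - C (a (χ a))) ^ ν (χ a) (a (χ a))) ∈ I := by
    intro χ
    have hsurj : ∃ i, ∀ b ∈ A i, ∃ a ∈ pts, χ a = i ∧ a i = b := by
      by_contra hc
      push_neg at hc
      choose b hb hb2 using hc
      exact hb2 (χ b) b (Fintype.mem_piFinset.mpr hb) rfl rfl
    obtain ⟨i, hi⟩ := hsurj
    choose v hv1 hv2 hv3 using hi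
    set w : k → (Fin n → k) := fun c => if h : c ∈ A i then v c h else fun _ => 0 with hw
    have hwp : ∀ c (hc : c ∈ A i), w c = v c hc := fun c hc => by rw [hw]; simp [hc]
    have hinj : ∀ c ∈ A i, ∀ c' ∈ A i, w c = w c' → c = c' := by
      intro c hc c' hc' hEq
      have h1 : w c i = c := by rw [hwp c hc]; exact hv3 c hc
      have h2 : w c' i = c' := by rw [hwp c' hc']; exact hv3 c' hc'
      rw [← h1, ← h2, hEq]
    have hdvd : (∏ c ∈ A i, (X i - C c) ^ ν i c : MvPolynomial (Fin n) k)
        ∣ ∏ a ∈ pts, (X (χ a) - C (a (χ a))) ^ ν (χ a) (a (χ a)) := by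
      have heq : (∏ c ∈ A i, (X i - C c) ^ ν i c : MvPolynomial (Fin n) k)
          = ∏ a ∈ (A i).image w, (X (χ a) - C (a (χ a))) ^ ν (χ a) (a (χ a)) := by
        rw [Finset.prod_image hinj]
        refine (Finset.prod_congr rfl fun c hc => ?_)
        rw [hwp c hc, hv2 c hc, hv3 c hc]
      rw [heq]
      refine Finset.prod_dvd_prod_of_subset _ _ _ ?_
      intro a ha
      obtain ⟨c, hc, rfl⟩ := Finset.mem_image.mp ha
      rw [hwp c hc]
      exact hv1 c hc
    obtain ⟨t, ht⟩ := hdvd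
    rw [ht, hI]
    exact Ideal.mul_mem_right _ _ (Ideal.subset_span ⟨i, rfl⟩)
  have upper_mem : ∀ p : MvPolynomial (Fin n) k,
      (∏ a ∈ pts, (p - C (eval a p)) ^ m a) ∈ I := by
    intro p
    have hsub : {x : MvPolynomial (Fin n) k |
        ∃ χ : (Fin n → k) → Fin n,
          x = ∏ a ∈ pts, (X (χ a) - C (a (χ a))) ^ ν (χ a) (a (χ a))} ⊆ I := by
      rintro x ⟨χ, rfl⟩
      exact cover χ
    have hgmem : ∀ a ∈ pts, (p - C (eval a p)) ^ m a ∈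
        Ideal.span (Set.range fun i => (X i - C (a i)) ^ ν i (a i)) := by
      intro a ha
      have hz : eval a (p - C (eval a p)) = 0 := by simp
      have h := pow_mem_Qid (e := fun i => ν i (a i)) (b := a) (fun i => hν1 a ha i) hz
      exact h
    have hp2 := prod_mem_span_products (fun a i => (X i - C (a i)) ^ ν i (a i)) hptsne
      (fun a => (p - C (eval a p)) ^ m a) hgmem
    exact Ideal.span_le.mpr hsub hp2
  have hann : ∀ p : MvPolynomial (Fin n) k,
      (Polynomial.aeval (Ideal.Quotient.mkₐ k I p))
        (∏ a ∈ pts, (Polynomial.X - Polynomial.C (eval a p)) ^ m a) = 0 := by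
    intro p
    have hEq : ∀ a ∈ pts,
        (Polynomial.aeval p) ((Polynomial.X - Polynomial.C (eval a p)) ^ m a)
          = (p - C (eval a p)) ^ m a := by
      intro a _
      rw [map_pow, map_sub, Polynomial.aeval_X, Polynomial.aeval_C, algebraMap_eq]
    rw [Polynomial.aeval_algHom_apply, Ideal.Quotient.mkₐ_eq_mk,
      Ideal.Quotient.eq_zero_iff_mem, map_prod, Finset.prod_congr rfl hEq]
    exact upper_mem p
  set N := ∑ a ∈ pts, m a with hN
  have hdeg : ∀ c0 : (Fin n → k) → k,
      (∏ a ∈ pts, (Polynomial.X - Polynomial.C (c0 a)) ^ m a).natDegree = N := by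
    intro c0
    rw [Polynomial.natDegree_prod _ _ fun a _ => pow_ne_zero _ (Polynomial.X_sub_C_ne_zero _)]
    refine Finset.sum_congr rfl fun a _ => ?_
    rw [Polynomial.natDegree_pow, Polynomial.natDegree_X_sub_C, mul_one]
  have hub : ∀ δ : MvPolynomial (Fin n) k ⧸ I, (minpoly k δ).natDegree ≤ N := by
    intro δ
    obtain ⟨p, rfl⟩ := Ideal.Quotient.mkₐ_surjective k I δ
    have hPm : (∏ a ∈ pts, (Polynomial.X - Polynomial.C (eval a p)) ^ m a).Monic :=
      Polynomial.monic_prod_of_monic _ _ fun a _ => (Polynomial.monic_X_sub_C _).pow _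
    have h := Polynomial.natDegree_le_of_dvd (minpoly.dvd k _ (hann p)) hPm.ne_zero
    rwa [hdeg] at h
  obtain ⟨lam, hlam0, hlaminj⟩ := Stmt8.exists_lambda pts
  set p0 : MvPolynomial (Fin n) k := ∑ i, C (lam i) * X i with hp0
  set δ0 : MvPolynomial (Fin n) k ⧸ I := Ideal.Quotient.mkₐ k I p0 with hδ0
  have hceval : ∀ b : Fin n → k, eval b p0 = ∑ i, lam i * b i := by
    intro b; rw [hp0, map_sum]; simp
  have hint : IsIntegral k δ0 :=
    ⟨∏ a ∈ pts, (Polynomial.X - Polynomial.C (eval a p0)) ^ m a,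
      Polynomial.monic_prod_of_monic _ _ fun a _ => (Polynomial.monic_X_sub_C _).pow _,
      hann p0⟩
  have hq0 : minpoly k δ0 ≠ 0 := minpoly.ne_zero hint
  have hmain : ∀ b ∈ pts,
      (Polynomial.X - Polynomial.C (eval b p0)) ^ m b ∣ minpoly k δ0 := by
    intro b hb
    obtain ⟨u, hu, hund⟩ :=
      (minpoly k δ0).exists_eq_pow_rootMultiplicity_mul_and_not_dvd hq0 (eval b p0)
    set e := (minpoly k δ0).rootMultiplicity (eval b p0) with he
    have hueval : Polynomial.eval (eval b p0) u ≠ 0 :=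
      fun h => hund (Polynomial.dvd_iff_isRoot.mpr h)
    set Qb : Ideal (MvPolynomial (Fin n) k) :=
      Ideal.span (Set.range fun i => (X i - C (b i)) ^ ν i (b i)) with hQb
    have hIQb : I ≤ Qb := by
      rw [hI]
      refine Ideal.span_le.mpr ?_
      rintro x ⟨i, rfl⟩
      show (∏ a ∈ A i, (X i - C a) ^ ν i a) ∈ Qb
      rw [← Finset.mul_prod_erase (A i) _ (hA1 b hb i)]
      exact Ideal.mul_mem_right _ _ (Ideal.subset_span ⟨i, rfl⟩)
    have hqp : Polynomial.aeval p0 (minpoly k δ0) ∈ Qb := by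
      apply hIQb
      rw [← Ideal.Quotient.eq_zero_iff_mem]
      have h := minpoly.aeval k δ0
      rw [hδ0, Polynomial.aeval_algHom_apply, Ideal.Quotient.mkₐ_eq_mk] at h
      exact h
    have hexp : Polynomial.aeval p0 (minpoly k δ0)
        = (p0 - C (eval b p0)) ^ e * Polynomial.aeval p0 u := by
      conv_lhs => rw [hu]
      rw [map_mul, map_pow, map_sub, Polynomial.aeval_X, Polynomial.aeval_C, algebraMap_eq]
    have hunit : IsUnit (Ideal.Quotient.mk Qb (Polynomial.aeval p0 u)) := by
      apply Stmt8.isUnit_mk_of_eval_ne_zero (fun i => hν1 b hb i)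
      have hcomp : eval b (Polynomial.aeval p0 u) = Polynomial.eval (eval b p0) u := by
        rw [Polynomial.aeval_def, Polynomial.hom_eval₂]
        have hid : (eval b).comp (algebraMap k (MvPolynomial (Fin n) k)) = RingHom.id k := by
          ext a; simp [algebraMap_eq]
        rw [hid]
        rfl
      rw [hcomp]
      exact hueval
    have hη : (Ideal.Quotient.mk Qb (p0 - C (eval b p0))) ^ e = 0 := by
      have h0 : Ideal.Quotient.mk Qb (Polynomial.aeval p0 (minpoly k δ0)) = 0 :=
        Ideal.Quotient.eq_zero_iff_mem.mpr hqp
      rw [hexp, RingHom.map_mul, RingHom.map_pow] at h0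
      exact (IsUnit.mul_left_eq_zero hunit).mp h0
    have hsum1 : m b - 1 = ∑ i, (ν i (b i) - 1) := by
      have h1 := hsn b hb
      have h2 : ∑ i, ν i (b i) = (∑ i, (ν i (b i) - 1)) + n := by
        calc ∑ i, ν i (b i) = ∑ i, ((ν i (b i) - 1) + 1) :=
              Finset.sum_congr rfl fun i _ => by have := hν1 b hb i; omega
        _ = (∑ i, (ν i (b i) - 1)) + ∑ _i : Fin n, 1 := Finset.sum_add_distrib
        _ = _ := by simp
      have h3 : m b = (∑ i, ν i (b i)) - n + 1 := rfl
      omega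
    have hηm : (Ideal.Quotient.mk Qb (p0 - C (eval b p0))) ^ (m b - 1) ≠ 0 := by
      intro hz
      rw [← RingHom.map_pow, Ideal.Quotient.eq_zero_iff_mem] at hz
      have hrw : p0 - C (eval b p0) = ∑ i, C (lam i) * (X i - C (b i)) := by
        rw [hp0, hceval, map_sum, ← Finset.sum_sub_distrib]
        refine Finset.sum_congr rfl fun i _ => ?_
        rw [map_mul]
        ring
      rw [hrw, hsum1] at hz
      exact Stmt8.pow_not_mem_Qid (fun i => hν1 b hb i) hlam0 hz
    have hem : m b ≤ e := by
      by_contra hlt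
      push_neg at hlt
      apply hηm
      have hsplit : m b - 1 = e + (m b - 1 - e) := by omega
      rw [hsplit, pow_add, hη, zero_mul]
    exact dvd_trans (pow_dvd_pow _ hem) (he ▸ Polynomial.pow_rootMultiplicity_dvd _ _)
  have hprod : (∏ b ∈ pts, (Polynomial.X - Polynomial.C (eval b p0)) ^ m b)
      ∣ minpoly k δ0 := by
    refine Finset.prod_dvd_of_coprime ?_ hmain
    intro a ha b hb hab
    refine IsCoprime.pow (Polynomial.isCoprime_X_sub_C_of_isUnit_sub ?_)
    refine (sub_ne_zero.mpr ?_).isUnit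
    intro hEq
    rw [hceval, hceval] at hEq
    exact hab (hlaminj a (Finset.mem_coe.mp ha) b (Finset.mem_coe.mp hb) hEq)
  have hlb : N ≤ (minpoly k δ0).natDegree := by
    have h := Polynomial.natDegree_le_of_dvd hprod hq0
    rwa [hdeg] at h
  have hNmem : (minpoly k δ0).natDegree = N := le_antisymm (hub δ0) hlb
  show _ = N
  apply le_antisymm
  · refine csSup_le ⟨_, ⟨0, rfl⟩⟩ ?_
    rintro x ⟨δ, rfl⟩
    exact hub δ
  · exact le_csSup ⟨N, by rintro x ⟨δ, rfl⟩; exact hub δ⟩ ⟨δ0, hNmem⟩
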